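/- Let G be a DAG and let A be a vertex with no parent (no directed edge into A). If there is a directed edge u → v, then on every active path starting at A that contains both u and v, the vertex u occurs before the vertex v. -/

import Mathlib

/-- A path in a directed graph `D`: a list of at least two pairwise distinct
vertices in which every two consecutive vertices `u, v` satisfy `D u v` or `D v u`. -/
def IsPath {V : Type*} (D : V → V → Prop) (p : List V) : Prop :=
  2 ≤ p.length ∧ p.Nodup ∧ p.Chain' (fun u v => D u v ∨ D v u)

/-- A path is active if no internal vertex on it is a collider. -/
def IsActive {V : Type*} (D : V → V → Prop) (p : List V) : Prop :=
  ∀ a b c : V, [a, b, c] <:+: p → ¬ (D a b ∧ D c b)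

/-- `u` occurs before `v` on the list `p`. -/
def OccursBefore {V : Type*} (p : List V) (u v : V) : Prop :=
  ∃ i j : Fin p.length, i < j ∧ p.get i = u ∧ p.get j = v

lemma isActive_tail {V : Type*} {D : V → V → Prop} {x : V} {p : List V}
    (h : IsActive D (x :: p)) : IsActive D p := by
  intro a b c hinf
  exact h a b c (hinf.trans (List.suffix_cons x p).isInfix)

lemma directed_chain {V : Type*} {D : V → V → Prop} :
    ∀ (rest : List V) (x y : V), D x y →
      List.Chain' (fun u v => D u v ∨ D v u) (x :: y :: rest) →
      IsActive D (x :: y :: rest) → List.Chain' D (x :: y :: rest) := by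
  intro rest
  induction rest with
  | nil => intro x y hxy _ _; simp [List.Chain', hxy]
  | cons z rest ih =>
    intro x y hxy hch hact
    have hinf : [x, y, z] <:+: x :: y :: z :: rest :=
      (List.prefix_iff_eq_take.mpr rfl).isInfix
    have hnzy : ¬ D z y := fun h => hact x y z hinf ⟨hxy, h⟩
    have hyz : D y z :=
      ((List.isChain_cons_cons.mp (List.isChain_cons_cons.mp hch).2).1).resolve_right hnzy
    have := ih y z hyz (List.isChain_cons_cons.mp hch).2 (isActive_tail hact)
    exact List.isChain_cons_cons.mpr ⟨hxy, this⟩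

lemma transGen_of_chain' {V : Type*} {D : V → V → Prop} {p : List V}
    (hc : List.Chain' D p) (i j : Fin p.length) (hij : i < j) :
    Relation.TransGen D (p.get i) (p.get j) := by
  have hstep : ∀ k (hk : k < p.length - 1),
      D (p.get ⟨k, by omega⟩) (p.get ⟨k + 1, by omega⟩) :=
    fun k hk => List.isChain_iff_getElem.mp hc k (by omega)
  obtain ⟨j, hj⟩ := j
  obtain ⟨i, hi⟩ := i
  simp only [Fin.mk_lt_mk] at hij
  induction j with
  | zero => omega
  | succ k ihk =>
    rcases Nat.lt_or_ge i k with h | h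
    · exact (ihk (by omega) hstep h).tail (hstep k (by omega))
    · have : i = k := by omega
      subst this
      exact Relation.TransGen.single (hstep i (by omega))

/-- In a DAG in which `A` has no parent, if there is a directed edge `u → v`,
then on every active path starting at `A` containing both `u` and `v`, the
vertex `u` occurs before `v`. -/
theorem parent_occurs_before_on_active_path
    {V : Type*} [Fintype V] (D : V → V → Prop)
    (hirr : Irreflexive D) (hasym : ∀ u v, D u v → ¬ D v u)
    (hdag : Irreflexive (Relation.TransGen D))
    (A : V) (hA : ∀ w, ¬ D w A)
    (u v : V) (huv : D u v)
    (p : List V) (hp : IsPath D p) (hact : IsActive D p)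
    (hhead : p.head? = some A)
    (hu : u ∈ p) (hv : v ∈ p) :
    OccursBefore p u v := by
  obtain ⟨hlen, hnd, hch⟩ := hp
  -- p = A :: b :: rest
  match p, hhead with
  | x :: q, hhead =>
  have hx : x = A := by simpa using hhead
  subst hx
  match q, hlen with
  | b :: rest, _ =>
  have hab : D x b := by
    rcases (List.isChain_cons_cons.mp hch).1 with h | h
    · exact h
    · exact absurd h (hA b)
  have hchain : List.Chain' D (x :: b :: rest) := directed_chain rest x b hab hch hact
  obtain ⟨i, hi⟩ := List.mem_iff_get.mp hu
  obtain ⟨j, hj⟩ := List.mem_iff_get.mp hv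
  have hne : i ≠ j := by
    intro h; subst h; rw [hi] at hj; exact hirr u (hj ▸ huv)
  rcases lt_or_gt_of_ne hne with h | h
  · exact ⟨i, j, h, hi, hj⟩
  · exfalso
    have := transGen_of_chain' hchain j i h
    rw [hi, hj] at this
    exact hdag u (Relation.TransGen.head huv this)
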